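/- arXiv:1010.5001 — 4 statements merged into one kernel-verified Lean document; each statement's English description precedes it below -/
import Mathlib

section
/- Let f be a Schwartz function on ℝ and t ∈ ℝ. Then for every x ∈ ℝ, x·(U(t)f)(x) = (U(t)g)(x), where g is the Schwartz function g(y) = 3t·f''(y) + y·f(y). In other words, the operator x + 3t∂_x² commutes with the Airy group: x U(t)f = U(t)(3t ∂_x² f + x f). -/
open MeasureTheory Complex

/-- Fourier transform `f̂(ξ) = ∫ f(x) e^{-ixξ} dx`. -/
noncomputable def FT (f : ℝ → ℂ) (ξ : ℝ) : ℂ :=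
  ∫ x : ℝ, f x * Complex.exp (-Complex.I * x * ξ)

/-- Inverse Fourier transform `f̌(x) = (2π)⁻¹ ∫ f(ξ) e^{ixξ} dξ`. -/
noncomputable def invFT (f : ℝ → ℂ) (x : ℝ) : ℂ :=
  (2 * Real.pi)⁻¹ • ∫ ξ : ℝ, f ξ * Complex.exp (Complex.I * x * ξ)

/-- The Airy group: `U(t)f` is the inverse Fourier transform of `ξ ↦ e^{itξ³} f̂(ξ)`. -/
noncomputable def airyU (t : ℝ) (f : ℝ → ℂ) : ℝ → ℂ :=
  invFT fun ξ => Complex.exp (Complex.I * t * (ξ : ℂ) ^ 3) * FT f ξ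

open FourierTransform Real

lemma FT_eq (f : ℝ → ℂ) (ξ : ℝ) : FT f ξ = 𝓕 f (ξ / (2 * π)) := by
  rw [Real.fourier_real_eq_integral_exp_smul]
  unfold FT
  congr 1
  funext v
  rw [smul_eq_mul, mul_comm]
  congr 1
  have : (-2 * π * v * (ξ / (2 * π)) : ℝ) = -(v * ξ) := by
    field_simp
  rw [this]
  push_cast
  ring

lemma FT_const_mul (c : ℂ) (g : ℝ → ℂ) (ξ : ℝ) :
    FT (fun y => c * g y) ξ = c * FT g ξ := by
  unfold FT
  simp_rw [mul_assoc]
  exact integral_const_mul c _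

lemma mul_exp_integrable (a : ℝ → ℂ) (ha : Integrable a) (ξ : ℝ) :
    Integrable (fun y : ℝ => a y * Complex.exp (-Complex.I * y * ξ)) := by
  refine ha.norm.mono' (ha.1.mul ?_) ?_
  · exact (Complex.continuous_exp.comp (by fun_prop)).aestronglyMeasurable
  · filter_upwards with y
    simp [Complex.norm_exp]

lemma FT_add (a b : ℝ → ℂ) (ha : Integrable a) (hb : Integrable b) (ξ : ℝ) :
    FT (fun y => a y + b y) ξ = FT a ξ + FT b ξ := by
  unfold FT
  simp_rw [add_mul]
  exact integral_add (mul_exp_integrable a ha ξ) (mul_exp_integrable b hb ξ)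

lemma FT_deriv {g : ℝ → ℂ} (hg : Integrable g) (hdg : Differentiable ℝ g)
    (hg' : Integrable (deriv g)) (ξ : ℝ) :
    FT (deriv g) ξ = Complex.I * ξ * FT g ξ := by
  rw [FT_eq, FT_eq, congrFun (Real.fourier_deriv hg hdg hg') (ξ / (2 * π)),
    smul_eq_mul]
  congr 1
  have hπ : (π : ℂ) ≠ 0 := Complex.ofReal_ne_zero.mpr Real.pi_ne_zero
  push_cast
  field_simp

lemma integrable_id_mul (φ : SchwartzMap ℝ ℂ) :
    Integrable (fun y : ℝ => (y : ℂ) * φ y) := by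
  refine (φ.integrable_pow_mul volume 1).mono'
    ((continuous_ofReal.mul φ.continuous).aestronglyMeasurable) ?_
  filter_upwards with y
  simp [Real.norm_eq_abs]

lemma FT_mul_arg (φ : SchwartzMap ℝ ℂ) (ξ : ℝ) :
    FT (fun y : ℝ => (y : ℂ) * φ y) ξ = Complex.I * deriv (FT ⇑φ) ξ := by
  have hπ : (π : ℂ) ≠ 0 := Complex.ofReal_ne_zero.mpr Real.pi_ne_zero
  have hint : Integrable (fun x : ℝ => x • (φ x : ℂ)) := by
    have := integrable_id_mul φ
    simpa [Complex.real_smul] using this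
  have h1 := Real.hasDerivAt_fourier φ.integrable hint (ξ / (2 * π))
  have h2 : HasDerivAt (fun ξ : ℝ => ξ / (2 * π)) (2 * π)⁻¹ ξ := by
    simpa using (hasDerivAt_id ξ).div_const (2 * π)
  have h3 := h1.scomp ξ h2
  have hFTf : FT ⇑φ = fun ξ => 𝓕 ⇑φ (ξ / (2 * π)) := funext fun ξ => FT_eq ⇑φ ξ
  have h4 : HasDerivAt (FT ⇑φ)
      ((2 * π)⁻¹ • 𝓕 (fun x : ℝ => (-2 * π * Complex.I * x) • φ x) (ξ / (2 * π))) ξ := by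
    rw [hFTf]
    exact h3
  rw [h4.deriv, ← FT_eq]
  have h5 : FT (fun x : ℝ => (-2 * π * Complex.I * x) • (φ x : ℂ)) ξ
      = (-2 * π * Complex.I) * FT (fun y : ℝ => (y : ℂ) * φ y) ξ := by
    rw [← FT_const_mul]
    congr 1
    funext y
    rw [smul_eq_mul]
    ring
  rw [h5, Complex.real_smul]
  push_cast
  field_simp
  linear_combination (FT (fun y : ℝ => (y : ℂ) * φ y) ξ) * Complex.I_sq

lemma key_ibp {g : ℝ → ℂ} (hg : Integrable g) (hdg : Differentiable ℝ g)
    (hg' : Integrable (deriv g)) (x : ℝ) :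
    (x : ℂ) * ∫ ξ : ℝ, g ξ * Complex.exp (Complex.I * x * ξ)
      = ∫ ξ : ℝ, (Complex.I * deriv g ξ) * Complex.exp (Complex.I * x * ξ) := by
  have e1 : ∀ u : ℝ → ℂ, (∫ ξ : ℝ, u ξ * Complex.exp (Complex.I * x * ξ)) = FT u (-x) := by
    intro u
    unfold FT
    congr 1
    funext ξ
    congr 2
    push_cast
    ring
  rw [e1 g, e1 (fun ξ => Complex.I * deriv g ξ), FT_const_mul, FT_deriv hg hdg hg' (-x)]
  push_cast
  linear_combination ((x : ℂ) * FT g (-x)) * Complex.I_sq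

noncomputable def scInv : ℝ ≃L[ℝ] ℝ :=
  (LinearEquiv.smulOfNeZero ℝ ℝ (2 * π)⁻¹
    (by positivity)).toContinuousLinearEquiv

noncomputable def FTS (f : SchwartzMap ℝ ℂ) : SchwartzMap ℝ ℂ :=
  SchwartzMap.compCLMOfContinuousLinearEquiv ℝ scInv (SchwartzMap.fourierTransformCLM ℂ f)

lemma FTS_apply (f : SchwartzMap ℝ ℂ) : ⇑(FTS f) = FT ⇑f := by
  funext ξ
  rw [FT_eq]
  show 𝓕 ⇑f ((2 * π)⁻¹ • ξ) = 𝓕 ⇑f (ξ / (2 * π))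
  rw [smul_eq_mul, inv_mul_eq_div]

/-- The operator `x + 3t ∂_x²` commutes with the Airy group:
`x · (U(t)f)(x) = (U(t)(3t f'' + y f))(x)` for Schwartz `f`. -/
theorem stmt0 (f : SchwartzMap ℝ ℂ) (t : ℝ) :
    ∀ x : ℝ,
      (x : ℂ) * airyU t (fun y => f y) x
        = airyU t (fun y => 3 * (t : ℂ) * deriv (deriv fun z : ℝ => f z) y + (y : ℂ) * f y) x := by
  intro x
  -- notation
  set F : ℝ → ℂ := FT ⇑f with hFdef
  have hF : ⇑(FTS f) = F := FTS_apply f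
  have hFint : Integrable F := hF ▸ (FTS f).integrable
  have hFdiff : Differentiable ℝ F := hF ▸ (FTS f).differentiable
  have hFderiv : deriv F = ⇑(SchwartzMap.derivCLM ℝ ℂ (FTS f)) := by
    rw [← hF]
    funext ξ
    exact (SchwartzMap.derivCLM_apply ℝ (FTS f) ξ).symm
  have hF'int : Integrable (deriv F) := by
    rw [hFderiv]; exact (SchwartzMap.derivCLM ℝ ℂ (FTS f)).integrable
  -- the function h = phase * F and its derivative
  have hh : ∀ ξ : ℝ, HasDerivAt (fun ξ : ℝ => Complex.exp (Complex.I * t * (ξ : ℂ) ^ 3) * F ξ)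
      (Complex.exp (Complex.I * t * (ξ : ℂ) ^ 3) * (Complex.I * t * (3 * (ξ : ℂ) ^ 2)) * F ξ
        + Complex.exp (Complex.I * t * (ξ : ℂ) ^ 3) * deriv F ξ) ξ := by
    intro ξ
    have hF' : HasDerivAt F (deriv F ξ) ξ := (hFdiff ξ).hasDerivAt
    have h0 : HasDerivAt (fun y : ℝ => Complex.I * t * (y : ℂ) ^ 3)
        (Complex.I * t * (3 * (ξ : ℂ) ^ 2)) ξ := by
      have h1 : HasDerivAt (fun y : ℝ => ((y ^ 3 : ℝ) : ℂ)) (((3 * ξ ^ 2 : ℝ)) : ℂ) ξ := by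
        have := (hasDerivAt_pow 3 ξ).ofReal_comp (z := ξ)
        convert this using 1
        norm_num

      have h2 : (fun y : ℝ => Complex.I * t * ((y : ℂ)) ^ 3)
          = fun y : ℝ => Complex.I * t * ((y ^ 3 : ℝ) : ℂ) := by
        funext y
        push_cast
        ring
      rw [h2]
      have := h1.const_mul (Complex.I * (t : ℂ))
      convert this using 1
      all_goals first | (push_cast; ring) | rfl
    have hmul := h0.cexp.mul hF'
    exact hmul
  have habs : ∀ ξ : ℝ, ‖Complex.exp (Complex.I * t * (ξ : ℂ) ^ 3)‖ = 1 := by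
    intro ξ
    rw [Complex.norm_exp]
    have : (Complex.I * t * (ξ : ℂ) ^ 3).re = 0 := by
      simp [Complex.mul_re, Complex.mul_im, ← Complex.ofReal_pow]
    rw [this, Real.exp_zero]
  have hphasecont : Continuous (fun ξ : ℝ => Complex.exp (Complex.I * t * (ξ : ℂ) ^ 3)) := by
    fun_prop
  have hFcont : Continuous F := hF ▸ (FTS f).continuous
  have hhint : Integrable (fun ξ : ℝ => Complex.exp (Complex.I * t * (ξ : ℂ) ^ 3) * F ξ) := by
    refine hFint.norm.mono' ((hphasecont.mul hFcont).aestronglyMeasurable) ?_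
    filter_upwards with ξ
    rw [norm_mul, habs, one_mul]
  have hhdiff : Differentiable ℝ (fun ξ : ℝ => Complex.exp (Complex.I * t * (ξ : ℂ) ^ 3) * F ξ) :=
    fun ξ => (hh ξ).differentiableAt
  have hDeq : deriv (fun ξ : ℝ => Complex.exp (Complex.I * t * (ξ : ℂ) ^ 3) * F ξ)
      = fun ξ : ℝ => Complex.exp (Complex.I * t * (ξ : ℂ) ^ 3) * (Complex.I * t * (3 * (ξ : ℂ) ^ 2)) * F ξ
        + Complex.exp (Complex.I * t * (ξ : ℂ) ^ 3) * deriv F ξ :=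
    funext fun ξ => (hh ξ).deriv
  have hDint : Integrable (deriv (fun ξ : ℝ => Complex.exp (Complex.I * t * (ξ : ℂ) ^ 3) * F ξ)) := by
    rw [hDeq]
    apply Integrable.add
    · refine (((FTS f).integrable_pow_mul volume 2).const_mul (3 * |t|)).mono' ?_ ?_
      · exact ((hphasecont.mul (by fun_prop)).mul hFcont).aestronglyMeasurable
      · filter_upwards with ξ
        have h1 : ‖Complex.I * ↑t * (3 * (ξ : ℂ) ^ 2)‖ = |t| * (3 * ξ ^ 2) := by
          rw [show Complex.I * (t : ℂ) * (3 * (ξ : ℂ) ^ 2)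
              = (((t * (3 * ξ ^ 2) : ℝ)) : ℂ) * Complex.I by push_cast; ring]
          simp only [norm_mul, Complex.norm_real, Real.norm_eq_abs, Complex.norm_I, mul_one]
          rw [abs_of_nonneg (by norm_num : (0:ℝ) ≤ 3), abs_of_nonneg (sq_nonneg ξ)]
        rw [norm_mul, norm_mul, habs, one_mul, h1, ← hF,
          Real.norm_eq_abs, _root_.sq_abs]
        exact le_of_eq (by ring)
    · refine hF'int.norm.mono' ((hphasecont.mul (by
        rw [hFderiv]; exact (SchwartzMap.derivCLM ℝ ℂ (FTS f)).continuous)).aestronglyMeasurable) ?_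
      filter_upwards with ξ
      rw [norm_mul, habs, one_mul]
  -- Fourier transform of g
  have hd1f : deriv (fun z : ℝ => (f z : ℂ)) = ⇑(SchwartzMap.derivCLM ℝ ℂ f) := by
    funext ξ
    exact (SchwartzMap.derivCLM_apply ℝ f ξ).symm
  have hd2f : deriv (deriv (fun z : ℝ => (f z : ℂ)))
      = ⇑(SchwartzMap.derivCLM ℝ ℂ (SchwartzMap.derivCLM ℝ ℂ f)) := by
    rw [hd1f]
    funext ξ
    exact (SchwartzMap.derivCLM_apply ℝ (SchwartzMap.derivCLM ℝ ℂ f) ξ).symm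
  have hFT2 : ∀ ξ : ℝ, FT (deriv (deriv (fun z : ℝ => (f z : ℂ)))) ξ
      = Complex.I * ξ * (Complex.I * ξ * F ξ) := by
    intro ξ
    have e1 : FT (deriv (deriv (fun z : ℝ => (f z : ℂ)))) ξ
        = Complex.I * ξ * FT (deriv (fun z : ℝ => (f z : ℂ))) ξ := by
      refine FT_deriv ?_ ?_ ?_ ξ
      · rw [hd1f]; exact (SchwartzMap.derivCLM ℝ ℂ f).integrable
      · rw [hd1f]; exact (SchwartzMap.derivCLM ℝ ℂ f).differentiable
      · rw [hd2f]; exact (SchwartzMap.derivCLM ℝ ℂ (SchwartzMap.derivCLM ℝ ℂ f)).integrable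
    rw [e1]
    congr 1
    refine FT_deriv f.integrable f.differentiable ?_ ξ
    rw [hd1f]; exact (SchwartzMap.derivCLM ℝ ℂ f).integrable
  have hFTg : ∀ ξ : ℝ,
      FT (fun y : ℝ => 3 * (t : ℂ) * deriv (deriv fun z : ℝ => f z) y + (y : ℂ) * f y) ξ
        = 3 * (t : ℂ) * (Complex.I * ξ * (Complex.I * ξ * F ξ)) + Complex.I * deriv F ξ := by
    intro ξ
    have ha : Integrable (fun y : ℝ => 3 * (t : ℂ) * deriv (deriv fun z : ℝ => f z) y) := by
      have : Integrable (fun y : ℝ =>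
          3 * (t : ℂ) * (SchwartzMap.derivCLM ℝ ℂ (SchwartzMap.derivCLM ℝ ℂ f)) y) :=
        (SchwartzMap.derivCLM ℝ ℂ (SchwartzMap.derivCLM ℝ ℂ f)).integrable.const_mul _
      rw [show (deriv (deriv fun z : ℝ => (f z : ℂ)))
        = ⇑(SchwartzMap.derivCLM ℝ ℂ (SchwartzMap.derivCLM ℝ ℂ f)) from hd2f]
      exact this
    rw [FT_add _ _ ha (integrable_id_mul f) ξ, FT_const_mul (3 * (t : ℂ)) _ ξ,
      hFT2 ξ, FT_mul_arg f ξ]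
  -- main computation
  show (x : ℂ) * invFT (fun ξ => Complex.exp (Complex.I * t * (ξ : ℂ) ^ 3) * FT (fun y => f y) ξ) x
    = invFT (fun ξ => Complex.exp (Complex.I * t * (ξ : ℂ) ^ 3)
        * FT (fun y : ℝ => 3 * (t : ℂ) * deriv (deriv fun z : ℝ => f z) y + (y : ℂ) * f y) ξ) x
  unfold invFT
  rw [mul_smul_comm]
  rw [key_ibp hhint hhdiff hDint x]
  refine congrArg _ (integral_congr_ae (Filter.Eventually.of_forall fun ξ => ?_))
  show Complex.I * deriv (fun ξ : ℝ => Complex.exp (Complex.I * t * (ξ : ℂ) ^ 3) * F ξ) ξ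
      * Complex.exp (Complex.I * x * ξ)
    = (Complex.exp (Complex.I * t * (ξ : ℂ) ^ 3)
        * FT (fun y : ℝ => 3 * (t : ℂ) * deriv (deriv fun z : ℝ => f z) y + (y : ℂ) * f y) ξ)
      * Complex.exp (Complex.I * x * ξ)
  rw [hDeq, hFTg ξ]
  push_cast
  ring
end

section
/- Let k ≥ 1 be an integer, T > 0, and let u : ℝ×[0,T] → ℝ be continuous together with its partial derivatives ∂_t u, ∂_x u, ∂_x² u, ∂_x³ u, satisfying ∂_t u + ∂_x³ u + ∂_x(u^{k+1}) = 0 pointwise on ℝ×[0,T]. Assume that for every m ∈ ℕ, sup_{(x,t)∈ℝ×[0,T]} (1+|x|)^m (|u| + |∂_t u| + |∂_x u| + |∂_x² u| + |∂_x³ u|)(x,t) < ∞. Let φ ∈ C³(ℝ) be such that φ, φ', φ'', φ''' all have at most polynomial growth. Then ∫_ℝ φ(x)u²(x,T) dx − ∫_ℝ φ(x)u²(x,0) dx + 3∫_0^T∫_ℝ φ'(x)(∂_x u)²(x,t) dx dt − ∫_0^T∫_ℝ φ'''(x)u²(x,t) dx dt − (2(k+1)/(k+2))∫_0^T∫_ℝ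 φ'(x)u^{k+2}(x,t) dx dt = 0. -/
open MeasureTheory Set Filter

private lemma hcx {T : ℝ} {g : ℝ → ℝ → ℝ}
    (h : ContinuousOn (fun p : ℝ × ℝ => g p.1 p.2) (univ ×ˢ Icc 0 T)) {t : ℝ}
    (ht : t ∈ Icc (0:ℝ) T) : Continuous fun x => g x t := by
  rw [← continuousOn_univ]
  exact h.comp (continuous_id.prodMk continuous_const).continuousOn
    (fun x _ => ⟨trivial, ht⟩)

private lemma hct {T : ℝ} {g : ℝ → ℝ → ℝ}
    (h : ContinuousOn (fun p : ℝ × ℝ => g p.1 p.2) (univ ×ˢ Icc 0 T)) (x : ℝ) :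
    ContinuousOn (fun t => g x t) (Icc (0:ℝ) T) :=
  h.comp (continuous_const.prodMk continuous_id).continuousOn (fun t ht => ⟨trivial, ht⟩)

private lemma prodBound {x p a b C M B : ℝ} {m : ℕ} (hp : |p| ≤ C * (1+|x|)^m)
    (ha : (1+|x|)^(m+2) * |a| ≤ M) (hb : |b| ≤ B) :
    |p * a * b| ≤ C * M * B * (1+x^2)⁻¹ := by
  have hq1 : (1:ℝ) ≤ 1 + |x| := le_add_of_nonneg_right (abs_nonneg x)
  have hqpos : (0:ℝ) < 1 + |x| := lt_of_lt_of_le one_pos hq1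
  have hC : 0 ≤ C := by
    by_contra hC
    push_neg at hC
    have : C * (1+|x|)^m < 0 := mul_neg_of_neg_of_pos hC (pow_pos hqpos m)
    exact absurd (le_trans (abs_nonneg p) hp) (not_le.mpr this)
  have hM : 0 ≤ M := le_trans (by positivity) ha
  have hB : 0 ≤ B := le_trans (abs_nonneg b) hb
  have key : |p| * |a| * |b| * (1+|x|)^2 ≤ C * M * B := by
    have s1 : |p| * |a| ≤ (C * (1+|x|)^m) * |a| := mul_le_mul_of_nonneg_right hp (abs_nonneg a)
    have s2 : |p| * |a| * |b| ≤ (C * (1+|x|)^m) * |a| * B :=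
      mul_le_mul s1 hb (abs_nonneg b) (by positivity)
    have s3 : |p| * |a| * |b| * (1+|x|)^2 ≤ (C * (1+|x|)^m) * |a| * B * (1+|x|)^2 :=
      mul_le_mul_of_nonneg_right s2 (by positivity)
    have s5 : C * B * ((1+|x|)^(m+2) * |a|) ≤ C * B * M :=
      mul_le_mul_of_nonneg_left ha (mul_nonneg hC hB)
    calc |p| * |a| * |b| * (1+|x|)^2 ≤ (C * (1+|x|)^m) * |a| * B * (1+|x|)^2 := s3
      _ = C * B * ((1+|x|)^(m+2) * |a|) := by ring
      _ ≤ C * B * M := s5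
      _ = C * M * B := by ring
  rw [abs_mul, abs_mul, ← div_eq_mul_inv, le_div_iff₀ (by positivity)]
  calc |p| * |a| * |b| * (1 + x^2) ≤ |p| * |a| * |b| * (1+|x|)^2 := by
        have h2 : (1:ℝ) + x^2 ≤ (1+|x|)^2 := by nlinarith [abs_nonneg x, sq_abs x]
        have : 0 ≤ |p| * |a| * |b| := by positivity
        nlinarith
    _ ≤ C * M * B := key

private lemma prodBound2 {x p a b C M B e : ℝ} {m : ℕ} (hp : |p| ≤ C * (1+|x|)^m)
    (ha : (1+|x|)^(m+2) * |a| ≤ M) (hb : |b| ≤ B) (he : 0 ≤ e) :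
    |e * p * a * b| ≤ e * C * M * B * (1+x^2)⁻¹ := by
  have hp2 : |e * p| ≤ (e * C) * (1+|x|)^m := by
    rw [abs_mul, abs_of_nonneg he, mul_assoc]
    exact mul_le_mul_of_nonneg_left hp he
  exact prodBound hp2 ha hb

private lemma integrable_of_sqbound {g : ℝ → ℝ} (hg : Continuous g) {K : ℝ}
    (h : ∀ x, |g x| ≤ K * (1+x^2)⁻¹) : Integrable g := by
  refine (integrable_inv_one_add_sq.const_mul K).mono' hg.aestronglyMeasurable
    (ae_of_all _ fun x => ?_)
  rw [Real.norm_eq_abs]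
  exact h x

private lemma tendsto_zero_of_sqbound {g : ℝ → ℝ} {K : ℝ}
    (h : ∀ x, |g x| ≤ K * (1+x^2)⁻¹) :
    Tendsto g atTop (nhds 0) ∧ Tendsto g atBot (nhds 0) := by
  have htop : Tendsto (fun x : ℝ => 1 + x^2) atTop atTop :=
    tendsto_atTop_mono (fun x => by simp only [id_eq]; nlinarith [sq_nonneg (x-1)]) tendsto_id
  have hbot : Tendsto (fun x : ℝ => 1 + x^2) atBot atTop :=
    tendsto_atTop_mono (fun x => by nlinarith [sq_nonneg (x+1)]) tendsto_neg_atBot_atTop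
  have hb : ∀ x, ‖g x‖ ≤ K * (1+x^2)⁻¹ := fun x => by rw [Real.norm_eq_abs]; exact h x
  constructor
  · exact squeeze_zero_norm hb (by simpa using htop.inv_tendsto_atTop.const_mul K)
  · exact squeeze_zero_norm hb (by simpa using hbot.inv_tendsto_atTop.const_mul K)

private lemma integral_deriv_zero {F F' : ℝ → ℝ} (hd : ∀ x, HasDerivAt F (F' x) x)
    (hi : Integrable F') (htt : Tendsto F atTop (nhds 0)) (hbb : Tendsto F atBot (nhds 0)) :
    ∫ x, F' x = 0 := by
  have h1 := integral_Ioi_of_hasDerivAt_of_tendsto (a := 0)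
    (hd 0).continuousAt.continuousWithinAt (fun x _ => hd x) hi.integrableOn htt
  have h2 := integral_Iic_of_hasDerivAt_of_tendsto (a := 0)
    (hd 0).continuousAt.continuousWithinAt (fun x _ => hd x) hi.integrableOn hbb
  rw [← intervalIntegral.integral_Iic_add_Ioi hi.integrableOn hi.integrableOn, h1, h2]
  ring

private lemma split5 {q a b c d e M : ℝ} (hq : 0 ≤ q) (h : q*(a+b+c+d+e) ≤ M)
    (ha : 0 ≤ a) (hb : 0 ≤ b) (hc : 0 ≤ c) (hd : 0 ≤ d) (he : 0 ≤ e) :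
    q*a ≤ M ∧ q*b ≤ M ∧ q*c ≤ M ∧ q*d ≤ M ∧ q*e ≤ M := by
  refine ⟨?_, ?_, ?_, ?_, ?_⟩ <;>
    nlinarith [mul_nonneg hq ha, mul_nonneg hq hb, mul_nonneg hq hc,
      mul_nonneg hq hd, mul_nonneg hq he]

/-- Weighted energy identity for classical, rapidly decaying solutions of the
k-generalized KdV equation `∂_t u + ∂_x³ u + ∂_x(u^{k+1}) = 0` on `ℝ × [0,T]`. -/
theorem stmt2 (k : ℕ) (hk : 1 ≤ k) (T : ℝ) (hT : 0 < T)
    (u ut ux uxx uxxx : ℝ → ℝ → ℝ)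
    -- continuity of u and its partial derivatives on ℝ × [0,T]
    (hu_cont : ContinuousOn (fun p : ℝ × ℝ => u p.1 p.2) (Set.univ ×ˢ Set.Icc 0 T))
    (hut_cont : ContinuousOn (fun p : ℝ × ℝ => ut p.1 p.2) (Set.univ ×ˢ Set.Icc 0 T))
    (hux_cont : ContinuousOn (fun p : ℝ × ℝ => ux p.1 p.2) (Set.univ ×ˢ Set.Icc 0 T))
    (huxx_cont : ContinuousOn (fun p : ℝ × ℝ => uxx p.1 p.2) (Set.univ ×ˢ Set.Icc 0 T))
    (huxxx_cont : ContinuousOn (fun p : ℝ × ℝ => uxxx p.1 p.2) (Set.univ ×ˢ Set.Icc 0 T))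
    -- the partial derivatives
    (hux : ∀ x : ℝ, ∀ t ∈ Set.Icc (0 : ℝ) T, HasDerivAt (fun y => u y t) (ux x t) x)
    (huxx : ∀ x : ℝ, ∀ t ∈ Set.Icc (0 : ℝ) T, HasDerivAt (fun y => ux y t) (uxx x t) x)
    (huxxx : ∀ x : ℝ, ∀ t ∈ Set.Icc (0 : ℝ) T, HasDerivAt (fun y => uxx y t) (uxxx x t) x)
    (hut : ∀ x : ℝ, ∀ t ∈ Set.Icc (0 : ℝ) T,
      HasDerivWithinAt (fun s => u x s) (ut x t) (Set.Icc 0 T) t)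
    -- the equation: ∂_t u + ∂_x³ u + ∂_x(u^{k+1}) = 0, with ∂_x(u^{k+1}) = (k+1) u^k ∂_x u
    (hPDE : ∀ x : ℝ, ∀ t ∈ Set.Icc (0 : ℝ) T,
      ut x t + uxxx x t + ((k : ℝ) + 1) * u x t ^ k * ux x t = 0)
    -- rapid decay of u and its derivatives, uniformly for t ∈ [0,T]
    (hdecay : ∀ m : ℕ, ∃ M : ℝ, ∀ x : ℝ, ∀ t ∈ Set.Icc (0 : ℝ) T,
      (1 + |x|) ^ m * (|u x t| + |ut x t| + |ux x t| + |uxx x t| + |uxxx x t|) ≤ M)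
    -- the weight function φ ∈ C³ with polynomial growth of φ, φ', φ'', φ'''
    (φ : ℝ → ℝ) (hφ : ContDiff ℝ 3 φ)
    (hφgrowth : ∀ j : ℕ, j ≤ 3 → ∃ C : ℝ, ∃ m : ℕ, ∀ x : ℝ,
      |deriv^[j] φ x| ≤ C * (1 + |x|) ^ m) :
    (∫ x : ℝ, φ x * u x T ^ 2) - (∫ x : ℝ, φ x * u x 0 ^ 2)
      + 3 * (∫ t in (0 : ℝ)..T, ∫ x : ℝ, deriv φ x * ux x t ^ 2)
      - (∫ t in (0 : ℝ)..T, ∫ x : ℝ, deriv^[3] φ x * u x t ^ 2)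
      - (2 * ((k : ℝ) + 1) / ((k : ℝ) + 2))
          * (∫ t in (0 : ℝ)..T, ∫ x : ℝ, deriv φ x * u x t ^ (k + 2)) = 0 := by
  have hT0 : (0:ℝ) ∈ Icc (0:ℝ) T := ⟨le_refl 0, hT.le⟩
  have hTT : T ∈ Icc (0:ℝ) T := ⟨hT.le, le_refl T⟩
  set c : ℝ := 2 * ((k : ℝ) + 1) / ((k : ℝ) + 2) with hc
  have hk2ne : ((k:ℝ) + 2) ≠ 0 := by positivity
  have hcnn : 0 ≤ c := by rw [hc]; positivity
  -- smoothness of φ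
  have hstep3 := (show (3:WithTop ℕ∞) = 2 + 1 by norm_num) ▸ hφ
  rw [contDiff_succ_iff_deriv] at hstep3
  have hφd : Differentiable ℝ φ := hstep3.1
  have hφ2 : ContDiff ℝ 2 (deriv φ) := hstep3.2.2
  have hstep2 := (show (2:WithTop ℕ∞) = 1 + 1 by norm_num) ▸ hφ2
  rw [contDiff_succ_iff_deriv] at hstep2
  have hφd1 : Differentiable ℝ (deriv φ) := hstep2.1
  have hφ1 : ContDiff ℝ 1 (deriv (deriv φ)) := hstep2.2.2
  rw [contDiff_one_iff_deriv] at hφ1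
  have hφd2 : Differentiable ℝ (deriv (deriv φ)) := hφ1.1
  have hφc : Continuous φ := hφ.continuous
  have hφ1c : Continuous (deriv φ) := hφ2.continuous
  have hφ2c : Continuous (deriv (deriv φ)) := hφd2.continuous
  have hφ3c : Continuous (deriv^[3] φ) := hφ1.2
  -- polynomial growth of φ and its derivatives, with a single constant
  obtain ⟨C0, m0, h0⟩ := hφgrowth 0 (by norm_num)
  obtain ⟨C1, m1, h1⟩ := hφgrowth 1 (by norm_num)
  obtain ⟨C2, m2, h2⟩ := hφgrowth 2 (by norm_num)
  obtain ⟨C3, m3, h3⟩ := hφgrowth 3 (by norm_num)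
  have hq1 : ∀ x : ℝ, (1:ℝ) ≤ 1 + |x| := fun x => le_add_of_nonneg_right (abs_nonneg x)
  set Cφ : ℝ := max (max C0 C1) (max C2 C3) with hCφ
  set mφ : ℕ := max (max m0 m1) (max m2 m3) with hmφ
  have hC0 : 0 ≤ C0 := le_trans (abs_nonneg _) (by simpa using h0 0)
  have hCφnn : 0 ≤ Cφ := le_trans hC0 (le_trans (le_max_left _ _) (le_max_left _ _))
  have hmono : ∀ (Ci : ℝ) (mi : ℕ) (x : ℝ), Ci ≤ Cφ → mi ≤ mφ → 0 ≤ Ci →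
      Ci * (1+|x|)^mi ≤ Cφ * (1+|x|)^mφ := by
    intro Ci mi x hCi hmi hCi0
    exact mul_le_mul hCi (pow_le_pow_right₀ (hq1 x) hmi) (by positivity) hCφnn
  have hg0 : ∀ x, |φ x| ≤ Cφ * (1+|x|)^mφ := by
    intro x
    refine le_trans (by simpa using h0 x) (hmono C0 m0 x ?_ ?_ hC0)
    · exact le_trans (le_max_left _ _) (le_max_left _ _)
    · exact le_trans (le_max_left _ _) (le_max_left _ _)
  have hC1 : 0 ≤ C1 := le_trans (abs_nonneg _) (by simpa using h1 0)
  have hg1 : ∀ x, |deriv φ x| ≤ Cφ * (1+|x|)^mφ := by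
    intro x
    refine le_trans (by simpa using h1 x) (hmono C1 m1 x ?_ ?_ hC1)
    · exact le_trans (le_max_right _ _) (le_max_left _ _)
    · exact le_trans (le_max_right _ _) (le_max_left _ _)
  have hC2 : 0 ≤ C2 := le_trans (abs_nonneg _) (by simpa using h2 0)
  have hg2 : ∀ x, |deriv (deriv φ) x| ≤ Cφ * (1+|x|)^mφ := by
    intro x
    refine le_trans (by simpa using h2 x) (hmono C2 m2 x ?_ ?_ hC2)
    · exact le_trans (le_max_left _ _) (le_max_right _ _)
    · exact le_trans (le_max_left _ _) (le_max_right _ _)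
  have hC3 : 0 ≤ C3 := le_trans (abs_nonneg _) (by simpa using h3 0)
  have hg3 : ∀ x, |deriv^[3] φ x| ≤ Cφ * (1+|x|)^mφ := by
    intro x
    refine le_trans (by simpa using h3 x) (hmono C3 m3 x ?_ ?_ hC3)
    · exact le_trans (le_max_right _ _) (le_max_right _ _)
    · exact le_trans (le_max_right _ _) (le_max_right _ _)
  -- uniform bounds (m = 0)
  obtain ⟨B, hB⟩ := hdecay 0
  simp only [pow_zero, one_mul] at hB
  have hBu : ∀ x, ∀ t ∈ Icc (0:ℝ) T, |u x t| ≤ B := fun x t ht => by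
    have := hB x t ht
    have a1 := abs_nonneg (ut x t); have a2 := abs_nonneg (ux x t)
    have a3 := abs_nonneg (uxx x t); have a4 := abs_nonneg (uxxx x t)
    linarith
  have hBut : ∀ x, ∀ t ∈ Icc (0:ℝ) T, |ut x t| ≤ B := fun x t ht => by
    have := hB x t ht
    have a1 := abs_nonneg (u x t); have a2 := abs_nonneg (ux x t)
    have a3 := abs_nonneg (uxx x t); have a4 := abs_nonneg (uxxx x t)
    linarith
  have hBux : ∀ x, ∀ t ∈ Icc (0:ℝ) T, |ux x t| ≤ B := fun x t ht => by
    have := hB x t ht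
    have a1 := abs_nonneg (u x t); have a2 := abs_nonneg (ut x t)
    have a3 := abs_nonneg (uxx x t); have a4 := abs_nonneg (uxxx x t)
    linarith
  have hBuxx : ∀ x, ∀ t ∈ Icc (0:ℝ) T, |uxx x t| ≤ B := fun x t ht => by
    have := hB x t ht
    have a1 := abs_nonneg (u x t); have a2 := abs_nonneg (ut x t)
    have a3 := abs_nonneg (ux x t); have a4 := abs_nonneg (uxxx x t)
    linarith
  have hBuxxx : ∀ x, ∀ t ∈ Icc (0:ℝ) T, |uxxx x t| ≤ B := fun x t ht => by
    have := hB x t ht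
    have a1 := abs_nonneg (u x t); have a2 := abs_nonneg (ut x t)
    have a3 := abs_nonneg (ux x t); have a4 := abs_nonneg (uxx x t)
    linarith
  have hBnn : 0 ≤ B := le_trans (abs_nonneg _) (hBu 0 0 hT0)
  have hBpow : ∀ x, ∀ t ∈ Icc (0:ℝ) T, |u x t ^ (k+1)| ≤ B^(k+1) := fun x t ht => by
    rw [abs_pow]
    exact pow_le_pow_left₀ (abs_nonneg _) (hBu x t ht) _
  -- decay bounds at weight mφ + 2
  obtain ⟨M, hM⟩ := hdecay (mφ + 2)
  have hMu : ∀ x, ∀ t ∈ Icc (0:ℝ) T, (1+|x|)^(mφ+2) * |u x t| ≤ M := fun x t ht =>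
    (split5 (by positivity) (hM x t ht) (abs_nonneg _) (abs_nonneg _) (abs_nonneg _)
      (abs_nonneg _) (abs_nonneg _)).1
  have hMux : ∀ x, ∀ t ∈ Icc (0:ℝ) T, (1+|x|)^(mφ+2) * |ux x t| ≤ M := fun x t ht =>
    (split5 (by positivity) (hM x t ht) (abs_nonneg _) (abs_nonneg _) (abs_nonneg _)
      (abs_nonneg _) (abs_nonneg _)).2.2.1
  have hMnn : 0 ≤ M := le_trans (by positivity) (hMu 0 0 hT0)
  -- the flux function and its spatial derivative
  set F : ℝ → ℝ → ℝ := fun x t =>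
    -2*φ x*u x t*uxx x t + φ x*ux x t^2 + 2*deriv φ x*u x t*ux x t
      - deriv (deriv φ) x*u x t^2 - c*(φ x*u x t^(k+2)) with hFdef
  set Fx : ℝ → ℝ → ℝ := fun x t =>
    -2*φ x*u x t*uxxx x t + 3*deriv φ x*ux x t^2 - deriv^[3] φ x*u x t^2
      - c*(deriv φ x*u x t^(k+2)) - 2*((k:ℝ)+1)*(φ x*u x t^(k+1)*ux x t) with hFxdef
  set A : ℝ → ℝ → ℝ := fun x t => 2*φ x*u x t*ut x t with hAdef
  -- spatial derivative of F
  have hFderiv : ∀ t ∈ Icc (0:ℝ) T, ∀ x : ℝ, HasDerivAt (fun y => F y t) (Fx x t) x := by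
    intro t ht x
    have hu' : HasDerivAt (fun y => u y t) (ux x t) x := hux x t ht
    have hux' : HasDerivAt (fun y => ux y t) (uxx x t) x := huxx x t ht
    have huxx' : HasDerivAt (fun y => uxx y t) (uxxx x t) x := huxxx x t ht
    have hp0 : HasDerivAt φ (deriv φ x) x := (hφd x).hasDerivAt
    have hp1 : HasDerivAt (deriv φ) (deriv (deriv φ) x) x := (hφd1 x).hasDerivAt
    have hp2 : HasDerivAt (deriv (deriv φ)) (deriv^[3] φ x) x := (hφd2 x).hasDerivAt
    have T1 := ((hp0.const_mul (-2:ℝ)).mul hu').mul huxx'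
    have T2 := hp0.mul (hux'.pow 2)
    have T3 := ((hp1.const_mul (2:ℝ)).mul hu').mul hux'
    have T4 := hp2.mul (hu'.pow 2)
    have T5 := (hp0.mul (hu'.pow (k+2))).const_mul c
    have total := (((T1.add T2).add T3).sub T4).sub T5
    simp only [hFdef, hFxdef]
    refine total.congr_deriv ?_
    have e1 : k + 2 - 1 = k + 1 := by omega
    have e2 : 2 - 1 = 1 := by omega
    simp only [e1, e2, pow_one, Pi.pow_apply, Pi.mul_apply]
    push_cast
    rw [hc]
    field_simp
    ring
  -- pointwise identity defining A from Fx via the PDE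
  have hAeq : ∀ x : ℝ, ∀ t ∈ Icc (0:ℝ) T,
      A x t = Fx x t - 3*(deriv φ x*ux x t^2) + deriv^[3] φ x*u x t^2
        + c*(deriv φ x*u x t^(k+2)) := by
    intro x t ht
    have hp := hPDE x t ht
    have hut' : ut x t = -uxxx x t - ((k:ℝ)+1)*u x t^k*ux x t := by linarith
    simp only [hAdef, hFxdef]
    rw [hut']
    ring
  -- pointwise bounds
  have hbA : ∀ x : ℝ, ∀ t ∈ Icc (0:ℝ) T, |A x t| ≤ 2*Cφ*M*B*(1+x^2)⁻¹ := by
    intro x t ht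
    simp only [hAdef]
    exact prodBound2 (hg0 x) (hMu x t ht) (hBut x t ht) (by norm_num)
  have hb1 : ∀ x : ℝ, ∀ t ∈ Icc (0:ℝ) T,
      |deriv φ x*ux x t^2| ≤ Cφ*M*B*(1+x^2)⁻¹ := by
    intro x t ht
    rw [show deriv φ x*ux x t^2 = deriv φ x*ux x t*ux x t from by ring]
    exact prodBound (hg1 x) (hMux x t ht) (hBux x t ht)
  have hb2 : ∀ x : ℝ, ∀ t ∈ Icc (0:ℝ) T,
      |deriv^[3] φ x*u x t^2| ≤ Cφ*M*B*(1+x^2)⁻¹ := by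
    intro x t ht
    rw [show deriv^[3] φ x*u x t^2 = deriv^[3] φ x*u x t*u x t from by ring]
    exact prodBound (hg3 x) (hMu x t ht) (hBu x t ht)
  have hb3 : ∀ x : ℝ, ∀ t ∈ Icc (0:ℝ) T,
      |deriv φ x*u x t^(k+2)| ≤ Cφ*M*B^(k+1)*(1+x^2)⁻¹ := by
    intro x t ht
    rw [show deriv φ x*u x t^(k+2) = deriv φ x*u x t*u x t^(k+1) from by ring]
    exact prodBound (hg1 x) (hMu x t ht) (hBpow x t ht)
  have hbg0 : ∀ x : ℝ, ∀ t ∈ Icc (0:ℝ) T, |φ x*u x t^2| ≤ Cφ*M*B*(1+x^2)⁻¹ := by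
    intro x t ht
    rw [show φ x*u x t^2 = φ x*u x t*u x t from by ring]
    exact prodBound (hg0 x) (hMu x t ht) (hBu x t ht)
  have hbF : ∀ x : ℝ, ∀ t ∈ Icc (0:ℝ) T,
      |F x t| ≤ (6*(Cφ*M*B) + c*(Cφ*M*B^(k+1)))*(1+x^2)⁻¹ := by
    intro x t ht
    have B1 : |(-2:ℝ)*φ x*u x t*uxx x t| ≤ 2*Cφ*M*B*(1+x^2)⁻¹ := by
      rw [show (-2:ℝ)*φ x*u x t*uxx x t = -(2*φ x*u x t*uxx x t) from by ring, abs_neg]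
      exact prodBound2 (hg0 x) (hMu x t ht) (hBuxx x t ht) (by norm_num)
    have B2 : |φ x*ux x t^2| ≤ Cφ*M*B*(1+x^2)⁻¹ := by
      rw [show φ x*ux x t^2 = φ x*ux x t*ux x t from by ring]
      exact prodBound (hg0 x) (hMux x t ht) (hBux x t ht)
    have B3 : |(2:ℝ)*deriv φ x*u x t*ux x t| ≤ 2*Cφ*M*B*(1+x^2)⁻¹ :=
      prodBound2 (hg1 x) (hMu x t ht) (hBux x t ht) (by norm_num)
    have B4 : |deriv (deriv φ) x*u x t^2| ≤ Cφ*M*B*(1+x^2)⁻¹ := by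
      rw [show deriv (deriv φ) x*u x t^2 = deriv (deriv φ) x*u x t*u x t from by ring]
      exact prodBound (hg2 x) (hMu x t ht) (hBu x t ht)
    have B5 : |c*(φ x*u x t^(k+2))| ≤ c*Cφ*M*B^(k+1)*(1+x^2)⁻¹ := by
      rw [show c*(φ x*u x t^(k+2)) = c*φ x*u x t*u x t^(k+1) from by ring]
      exact prodBound2 (hg0 x) (hMu x t ht) (hBpow x t ht) hcnn
    have hsum : (6*(Cφ*M*B) + c*(Cφ*M*B^(k+1)))*(1+x^2)⁻¹
        = 2*Cφ*M*B*(1+x^2)⁻¹ + Cφ*M*B*(1+x^2)⁻¹ + 2*Cφ*M*B*(1+x^2)⁻¹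
          + Cφ*M*B*(1+x^2)⁻¹ + c*Cφ*M*B^(k+1)*(1+x^2)⁻¹ := by ring
    simp only [hFdef]
    rw [abs_le]
    constructor
    · rw [hsum]
      linarith [(abs_le.mp B1).1, (abs_le.mp B2).1, (abs_le.mp B3).1,
        (abs_le.mp B4).2, (abs_le.mp B5).2]
    · rw [hsum]
      linarith [(abs_le.mp B1).2, (abs_le.mp B2).2, (abs_le.mp B3).2,
        (abs_le.mp B4).1, (abs_le.mp B5).1]
  have hbFx : ∀ x : ℝ, ∀ t ∈ Icc (0:ℝ) T,
      |Fx x t| ≤ (6*(Cφ*M*B) + c*(Cφ*M*B^(k+1))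
        + 2*((k:ℝ)+1)*(Cφ*M*B^(k+1)))*(1+x^2)⁻¹ := by
    intro x t ht
    have B1 : |(-2:ℝ)*φ x*u x t*uxxx x t| ≤ 2*Cφ*M*B*(1+x^2)⁻¹ := by
      rw [show (-2:ℝ)*φ x*u x t*uxxx x t = -(2*φ x*u x t*uxxx x t) from by ring, abs_neg]
      exact prodBound2 (hg0 x) (hMu x t ht) (hBuxxx x t ht) (by norm_num)
    have B2 : |(3:ℝ)*deriv φ x*ux x t^2| ≤ 3*Cφ*M*B*(1+x^2)⁻¹ := by
      rw [show (3:ℝ)*deriv φ x*ux x t^2 = 3*deriv φ x*ux x t*ux x t from by ring]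
      exact prodBound2 (hg1 x) (hMux x t ht) (hBux x t ht) (by norm_num)
    have B4 : |deriv^[3] φ x*u x t^2| ≤ Cφ*M*B*(1+x^2)⁻¹ := hb2 x t ht
    have B5 : |c*(deriv φ x*u x t^(k+2))| ≤ c*Cφ*M*B^(k+1)*(1+x^2)⁻¹ := by
      rw [show c*(deriv φ x*u x t^(k+2)) = c*deriv φ x*u x t*u x t^(k+1) from by ring]
      exact prodBound2 (hg1 x) (hMu x t ht) (hBpow x t ht) hcnn
    have B6 : |(2:ℝ)*((k:ℝ)+1)*(φ x*u x t^(k+1)*ux x t)|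
        ≤ (2*((k:ℝ)+1))*Cφ*M*B^(k+1)*(1+x^2)⁻¹ := by
      rw [show (2:ℝ)*((k:ℝ)+1)*(φ x*u x t^(k+1)*ux x t)
        = (2*((k:ℝ)+1))*φ x*ux x t*u x t^(k+1) from by ring]
      exact prodBound2 (hg0 x) (hMux x t ht) (hBpow x t ht) (by positivity)
    have hsum : (6*(Cφ*M*B) + c*(Cφ*M*B^(k+1)) + 2*((k:ℝ)+1)*(Cφ*M*B^(k+1)))*(1+x^2)⁻¹
        = 2*Cφ*M*B*(1+x^2)⁻¹ + 3*Cφ*M*B*(1+x^2)⁻¹ + Cφ*M*B*(1+x^2)⁻¹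
          + c*Cφ*M*B^(k+1)*(1+x^2)⁻¹ + (2*((k:ℝ)+1))*Cφ*M*B^(k+1)*(1+x^2)⁻¹ := by ring
    simp only [hFxdef]
    rw [abs_le]
    constructor
    · rw [hsum]
      linarith [(abs_le.mp B1).1, (abs_le.mp B2).1, (abs_le.mp B4).2,
        (abs_le.mp B5).2, (abs_le.mp B6).2]
    · rw [hsum]
      linarith [(abs_le.mp B1).2, (abs_le.mp B2).2, (abs_le.mp B4).1,
        (abs_le.mp B5).1, (abs_le.mp B6).1]
  -- joint continuity of all integrands
  have contA : ContinuousOn (fun p : ℝ × ℝ => A p.1 p.2) (univ ×ˢ Icc 0 T) := by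
    simp only [hAdef]
    exact ((continuous_const.mul (hφc.comp continuous_fst)).continuousOn.mul
      hu_cont).mul hut_cont
  have cont1 : ContinuousOn (fun p : ℝ × ℝ => deriv φ p.1 * ux p.1 p.2 ^ 2)
      (univ ×ˢ Icc 0 T) :=
    (hφ1c.comp continuous_fst).continuousOn.mul (hux_cont.pow 2)
  have cont2 : ContinuousOn (fun p : ℝ × ℝ => deriv^[3] φ p.1 * u p.1 p.2 ^ 2)
      (univ ×ˢ Icc 0 T) :=
    (hφ3c.comp continuous_fst).continuousOn.mul (hu_cont.pow 2)
  have cont3 : ContinuousOn (fun p : ℝ × ℝ => deriv φ p.1 * u p.1 p.2 ^ (k+2))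
      (univ ×ˢ Icc 0 T) :=
    (hφ1c.comp continuous_fst).continuousOn.mul (hu_cont.pow (k+2))
  have contg0 : ContinuousOn (fun p : ℝ × ℝ => φ p.1 * u p.1 p.2 ^ 2)
      (univ ×ˢ Icc 0 T) :=
    (hφc.comp continuous_fst).continuousOn.mul (hu_cont.pow 2)
  have contF : ContinuousOn (fun p : ℝ × ℝ => F p.1 p.2) (univ ×ˢ Icc 0 T) := by
    simp only [hFdef]
    exact (((((((continuous_const.mul (hφc.comp continuous_fst)).continuousOn.mul
      hu_cont).mul huxx_cont).add
      ((hφc.comp continuous_fst).continuousOn.mul (hux_cont.pow 2))).add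
      (((continuous_const.mul (hφ1c.comp continuous_fst)).continuousOn.mul
        hu_cont).mul hux_cont)).sub
      ((hφ2c.comp continuous_fst).continuousOn.mul (hu_cont.pow 2))).sub
      (continuousOn_const.mul ((hφc.comp continuous_fst).continuousOn.mul
        (hu_cont.pow (k+2)))))
  have contFx : ContinuousOn (fun p : ℝ × ℝ => Fx p.1 p.2) (univ ×ˢ Icc 0 T) := by
    simp only [hFxdef]
    exact (((((((continuous_const.mul (hφc.comp continuous_fst)).continuousOn.mul
      hu_cont).mul huxxx_cont).add
      ((continuous_const.mul (hφ1c.comp continuous_fst)).continuousOn.mul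
        (hux_cont.pow 2))).sub
      ((hφ3c.comp continuous_fst).continuousOn.mul (hu_cont.pow 2))).sub
      (continuousOn_const.mul ((hφ1c.comp continuous_fst).continuousOn.mul
        (hu_cont.pow (k+2))))).sub
      (continuousOn_const.mul (((hφc.comp continuous_fst).continuousOn.mul
        (hu_cont.pow (k+1))).mul hux_cont)))
  -- integrability in x for each fixed t
  have intA : ∀ t ∈ Icc (0:ℝ) T, Integrable (fun x => A x t) := fun t ht =>
    integrable_of_sqbound (hcx contA ht) (fun x => hbA x t ht)
  have int1 : ∀ t ∈ Icc (0:ℝ) T, Integrable (fun x => deriv φ x * ux x t ^ 2) := fun t ht =>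
    integrable_of_sqbound (hcx (g := fun x t => deriv φ x * ux x t ^ 2) cont1 ht) (fun x => hb1 x t ht)
  have int2 : ∀ t ∈ Icc (0:ℝ) T, Integrable (fun x => deriv^[3] φ x * u x t ^ 2) := fun t ht =>
    integrable_of_sqbound (hcx (g := fun x t => deriv^[3] φ x * u x t ^ 2) cont2 ht) (fun x => hb2 x t ht)
  have int3 : ∀ t ∈ Icc (0:ℝ) T, Integrable (fun x => deriv φ x * u x t ^ (k+2)) := fun t ht =>
    integrable_of_sqbound (hcx (g := fun x t => deriv φ x * u x t ^ (k+2)) cont3 ht) (fun x => hb3 x t ht)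
  have intg0 : ∀ t ∈ Icc (0:ℝ) T, Integrable (fun x => φ x * u x t ^ 2) := fun t ht =>
    integrable_of_sqbound (hcx (g := fun x t => φ x * u x t ^ 2) contg0 ht) (fun x => hbg0 x t ht)
  have intFx : ∀ t ∈ Icc (0:ℝ) T, Integrable (fun x => Fx x t) := fun t ht =>
    integrable_of_sqbound (hcx contFx ht) (fun x => hbFx x t ht)
  -- the integral of the spatial derivative Fx vanishes
  have hFx0 : ∀ t ∈ Icc (0:ℝ) T, ∫ x, Fx x t = 0 := by
    intro t ht
    obtain ⟨htt, hbb⟩ := tendsto_zero_of_sqbound (fun x => hbF x t ht)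
    exact integral_deriv_zero (hFderiv t ht) (intFx t ht) htt hbb
  -- splitting the x-integral of A
  have hsplit : ∀ t ∈ Icc (0:ℝ) T,
      ∫ x, A x t = -3*(∫ x, deriv φ x * ux x t ^ 2) + (∫ x, deriv^[3] φ x * u x t ^ 2)
        + c*(∫ x, deriv φ x * u x t ^ (k+2)) := by
    intro t ht
    have hrw : (fun x => A x t) = fun x =>
        (Fx x t - 3*(deriv φ x*ux x t^2) + deriv^[3] φ x*u x t^2)
          + c*(deriv φ x*u x t^(k+2)) := funext fun x => hAeq x t ht
    rw [hrw]
    have i3 : Integrable (fun x => c*(deriv φ x*u x t^(k+2))) volume := (int3 t ht).const_mul c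
    have i1 : Integrable (fun x => 3*(deriv φ x*ux x t^2)) volume := (int1 t ht).const_mul 3
    have i12 : Integrable (fun x => Fx x t - 3*(deriv φ x*ux x t^2)) volume :=
      (intFx t ht).sub i1
    have i123 : Integrable
        (fun x => Fx x t - 3*(deriv φ x*ux x t^2) + deriv^[3] φ x*u x t^2) volume :=
      i12.add (int2 t ht)
    have e1 : (∫ x, (Fx x t - 3*(deriv φ x*ux x t^2) + deriv^[3] φ x*u x t^2
          + c*(deriv φ x*u x t^(k+2))))
        = (∫ x, (Fx x t - 3*(deriv φ x*ux x t^2) + deriv^[3] φ x*u x t^2))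
          + ∫ x, c*(deriv φ x*u x t^(k+2)) := integral_add i123 i3
    have e2 : (∫ x, (Fx x t - 3*(deriv φ x*ux x t^2) + deriv^[3] φ x*u x t^2))
        = (∫ x, (Fx x t - 3*(deriv φ x*ux x t^2))) + ∫ x, deriv^[3] φ x*u x t^2 :=
      integral_add i12 (int2 t ht)
    have e3 : (∫ x, (Fx x t - 3*(deriv φ x*ux x t^2)))
        = (∫ x, Fx x t) - ∫ x, 3*(deriv φ x*ux x t^2) := integral_sub (intFx t ht) i1
    rw [e1, e2, e3, integral_const_mul 3, integral_const_mul c, hFx0 t ht]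
    ring
  -- continuity in t of the parametric integrals
  have ct1 : ContinuousOn (fun t => ∫ x, deriv φ x * ux x t ^ 2) (Icc (0:ℝ) T) := by
    refine continuousOn_of_dominated (bound := fun x => Cφ*M*B*(1+x^2)⁻¹) ?_ ?_ ?_ ?_
    · intro t ht
      exact (hcx (g := fun x t => deriv φ x * ux x t ^ 2) cont1 ht).aestronglyMeasurable
    · intro t ht
      exact ae_of_all _ fun x => by rw [Real.norm_eq_abs]; exact hb1 x t ht
    · exact integrable_inv_one_add_sq.const_mul _
    · exact ae_of_all _ fun x => hct (g := fun x t => deriv φ x * ux x t ^ 2) cont1 x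
  have ct2 : ContinuousOn (fun t => ∫ x, deriv^[3] φ x * u x t ^ 2) (Icc (0:ℝ) T) := by
    refine continuousOn_of_dominated (bound := fun x => Cφ*M*B*(1+x^2)⁻¹) ?_ ?_ ?_ ?_
    · intro t ht
      exact (hcx (g := fun x t => deriv^[3] φ x * u x t ^ 2) cont2 ht).aestronglyMeasurable
    · intro t ht
      exact ae_of_all _ fun x => by rw [Real.norm_eq_abs]; exact hb2 x t ht
    · exact integrable_inv_one_add_sq.const_mul _
    · exact ae_of_all _ fun x => hct (g := fun x t => deriv^[3] φ x * u x t ^ 2) cont2 x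
  have ct3 : ContinuousOn (fun t => ∫ x, deriv φ x * u x t ^ (k+2)) (Icc (0:ℝ) T) := by
    refine continuousOn_of_dominated (bound := fun x => Cφ*M*B^(k+1)*(1+x^2)⁻¹) ?_ ?_ ?_ ?_
    · intro t ht
      exact (hcx (g := fun x t => deriv φ x * u x t ^ (k+2)) cont3 ht).aestronglyMeasurable
    · intro t ht
      exact ae_of_all _ fun x => by rw [Real.norm_eq_abs]; exact hb3 x t ht
    · exact integrable_inv_one_add_sq.const_mul _
    · exact ae_of_all _ fun x => hct (g := fun x t => deriv φ x * u x t ^ (k+2)) cont3 x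
  have II1 : IntervalIntegrable (fun t => ∫ x, deriv φ x * ux x t ^ 2) volume 0 T := by
    apply ContinuousOn.intervalIntegrable
    rwa [uIcc_of_le hT.le]
  have II2 : IntervalIntegrable (fun t => ∫ x, deriv^[3] φ x * u x t ^ 2) volume 0 T := by
    apply ContinuousOn.intervalIntegrable
    rwa [uIcc_of_le hT.le]
  have II3 : IntervalIntegrable (fun t => ∫ x, deriv φ x * u x t ^ (k+2)) volume 0 T := by
    apply ContinuousOn.intervalIntegrable
    rwa [uIcc_of_le hT.le]
  -- Fubini
  haveI : IsFiniteMeasure (volume.restrict (Ioc (0:ℝ) T)) :=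
    ⟨by rw [Measure.restrict_apply_univ]; exact measure_Ioc_lt_top⟩
  have hmeasS : MeasurableSet ((Ioc (0:ℝ) T) ×ˢ (univ : Set ℝ)) :=
    measurableSet_Ioc.prod MeasurableSet.univ
  have hmeq : (volume.restrict (Ioc (0:ℝ) T)).prod (volume : Measure ℝ)
      = ((volume : Measure ℝ).prod volume).restrict ((Ioc (0:ℝ) T) ×ˢ univ) := by
    rw [← Measure.prod_restrict, Measure.restrict_univ]
  have hintProd : Integrable (Function.uncurry fun t x => A x t)
      ((volume.restrict (Ioc 0 T)).prod volume) := by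
    have hcsw : ContinuousOn (fun p : ℝ × ℝ => A p.2 p.1) ((Ioc 0 T) ×ˢ (univ : Set ℝ)) := by
      have h1 : ContinuousOn (fun p : ℝ × ℝ => A p.2 p.1) ((Icc 0 T) ×ˢ (univ : Set ℝ)) :=
        contA.comp continuous_swap.continuousOn (fun p hp => ⟨trivial, hp.1⟩)
      exact h1.mono (fun p hp => ⟨Ioc_subset_Icc_self hp.1, hp.2⟩)
    have bdd : Integrable (fun p : ℝ × ℝ => (1:ℝ) * (2*Cφ*M*B*(1+p.2^2)⁻¹))
        ((volume.restrict (Ioc (0:ℝ) T)).prod volume) :=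
      (integrable_const (1:ℝ)).mul_prod (integrable_inv_one_add_sq.const_mul (2*Cφ*M*B))
    rw [hmeq] at bdd ⊢
    refine bdd.mono' (hcsw.aestronglyMeasurable hmeasS) ?_
    refine (ae_restrict_iff' hmeasS).mpr (ae_of_all _ fun p hp => ?_)
    simp only [Function.uncurry, Real.norm_eq_abs, one_mul]
    exact hbA p.2 p.1 (Ioc_subset_Icc_self hp.1)
  have swap : ∫ t in Ioc (0:ℝ) T, ∫ x, A x t = ∫ x, ∫ t in Ioc (0:ℝ) T, A x t :=
    MeasureTheory.integral_integral_swap hintProd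
  -- FTC in time for each x
  have hFTC : ∀ x : ℝ, ∫ t in (0:ℝ)..T, A x t = φ x*u x T^2 - φ x*u x 0^2 := by
    intro x
    have hcont : ContinuousOn (fun t => φ x*u x t^2) (Icc 0 T) :=
      continuousOn_const.mul ((hct (g := u) hu_cont x).pow 2)
    have hderiv : ∀ t ∈ Ioo (0:ℝ) T,
        HasDerivWithinAt (fun s => φ x*u x s^2) (A x t) (Ioi t) t := by
      intro t ht'
      have hd := (hut x t (Ioo_subset_Icc_self ht')).hasDerivAt (Icc_mem_nhds ht'.1 ht'.2)
      have hd2 := (hd.pow 2).const_mul (φ x)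
      have : HasDerivAt (fun s => φ x*u x s^2) (A x t) t := by
        refine hd2.congr_deriv ?_
        try simp only [hAdef]
        push_cast
        ring
      exact this.hasDerivWithinAt
    have hii : IntervalIntegrable (fun t => A x t) volume 0 T := by
      apply ContinuousOn.intervalIntegrable
      rw [uIcc_of_le hT.le]
      exact hct contA x
    exact intervalIntegral.integral_eq_sub_of_hasDeriv_right_of_le hT.le hcont hderiv hii
  -- the two evaluations of the double integral
  have E1 : ∫ t in (0:ℝ)..T, ∫ x, A x t = (∫ x, φ x*u x T^2) - ∫ x, φ x*u x 0^2 := by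
    rw [intervalIntegral.integral_of_le hT.le, swap]
    have hfe : (fun x => ∫ t in Ioc (0:ℝ) T, A x t)
        = fun x => φ x*u x T^2 - φ x*u x 0^2 := funext fun x => by
      rw [← intervalIntegral.integral_of_le hT.le]
      exact hFTC x
    rw [hfe]
    exact integral_sub (intg0 T hTT) (intg0 0 hT0)
  have E2 : ∫ t in (0:ℝ)..T, ∫ x, A x t
      = -3*(∫ t in (0:ℝ)..T, ∫ x, deriv φ x * ux x t ^ 2)
        + (∫ t in (0:ℝ)..T, ∫ x, deriv^[3] φ x * u x t ^ 2)
        + c*(∫ t in (0:ℝ)..T, ∫ x, deriv φ x * u x t ^ (k+2)) := by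
    have hEqOn : EqOn (fun t => ∫ x, A x t)
        (fun t => -3*(∫ x, deriv φ x*ux x t^2) + (∫ x, deriv^[3] φ x*u x t^2)
          + c*(∫ x, deriv φ x*u x t^(k+2))) (uIcc (0:ℝ) T) := by
      intro t ht'
      rw [uIcc_of_le hT.le] at ht'
      exact hsplit t ht'
    rw [_root_.intervalIntegral.integral_congr hEqOn]
    have ee1 : ∫ t in (0:ℝ)..T, (-3*(∫ x, deriv φ x*ux x t^2)
          + (∫ x, deriv^[3] φ x*u x t^2) + c*(∫ x, deriv φ x*u x t^(k+2)))
        = (∫ t in (0:ℝ)..T, (-3*(∫ x, deriv φ x*ux x t^2) + (∫ x, deriv^[3] φ x*u x t^2)))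
          + ∫ t in (0:ℝ)..T, c*(∫ x, deriv φ x*u x t^(k+2)) :=
      intervalIntegral.integral_add ((II1.const_mul (-3)).add II2) (II3.const_mul c)
    have ee2 : ∫ t in (0:ℝ)..T, (-3*(∫ x, deriv φ x*ux x t^2)
          + (∫ x, deriv^[3] φ x*u x t^2))
        = (∫ t in (0:ℝ)..T, -3*(∫ x, deriv φ x*ux x t^2))
          + ∫ t in (0:ℝ)..T, (∫ x, deriv^[3] φ x*u x t^2) :=
      intervalIntegral.integral_add (II1.const_mul (-3)) II2
    rw [ee1, ee2, _root_.intervalIntegral.integral_const_mul,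
      _root_.intervalIntegral.integral_const_mul]
  linarith [E1, E2]
end

section
/- There is an absolute constant C such that for all real numbers a < b < 0, the integral ∫_0^π (e^{a·sin s} − e^{b·sin s})/sin s ds converges absolutely and |∫_0^π (e^{a·sin s} − e^{b·sin s})/sin s ds| ≤ C·((πa/b − 1) + 1 + (b/(πa))·e^{−πa/b}). -/
open MeasureTheory Real

-- pointwise bound
lemma ptbound (a b : ℝ) (hab : a < b) (hb : b < 0) (x : ℝ) (hx : 0 ≤ x) :
    |Real.exp (a * x) - Real.exp (b * x)| ≤ (b - a) * x * Real.exp (b * x) := by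
  have h1 : Real.exp (a * x) ≤ Real.exp (b * x) :=
    Real.exp_le_exp.2 (by nlinarith)
  rw [abs_sub_comm, abs_of_nonneg (by linarith)]
  have h2 : (a - b) * x + 1 ≤ Real.exp ((a - b) * x) := Real.add_one_le_exp _
  have h3 : Real.exp (a * x) = Real.exp (b * x) * Real.exp ((a - b) * x) := by
    rw [← Real.exp_add]; ring_nf
  have h4 := Real.exp_pos (b * x)
  nlinarith [Real.exp_pos ((a-b)*x)]



lemma intA (b : ℝ) (hb : b < 0) :
    ∫ s in (0:ℝ)..(Real.pi/2), Real.exp (b * Real.sin s) ≤ Real.pi / (2 * (-b)) := by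
  have hπ := Real.pi_pos
  have h1 : ∫ s in (0:ℝ)..(Real.pi/2), Real.exp (b * Real.sin s)
      ≤ ∫ s in (0:ℝ)..(Real.pi/2), Real.exp (2 * b / Real.pi * s) := by
    apply intervalIntegral.integral_mono_on (by linarith)
    · exact (Continuous.rexp (by continuity)).intervalIntegrable _ _
    · exact (Continuous.rexp (by continuity)).intervalIntegrable _ _
    · intro x hx
      apply Real.exp_le_exp.2
      have h := mul_le_mul_of_nonpos_left (Real.mul_le_sin hx.1 hx.2) hb.le
      have he : 2 * b / Real.pi * x = b * (2 / Real.pi * x) := by ring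
      linarith
  have hderiv : ∀ x ∈ Set.uIcc (0:ℝ) (Real.pi/2),
      HasDerivAt (fun s => Real.pi / (2*b) * Real.exp (2 * b / Real.pi * s))
        (Real.exp (2 * b / Real.pi * x)) x := by
    intro x _
    have h := (((hasDerivAt_id x).const_mul (2 * b / Real.pi)).exp).const_mul (Real.pi / (2*b))
    have hb0 : b ≠ 0 := ne_of_lt hb
    have hπ0 : Real.pi ≠ 0 := ne_of_gt hπ
    convert h using 1
    all_goals try rfl
    simp only [id_eq, mul_one]
    field_simp
  have h2 := intervalIntegral.integral_eq_sub_of_hasDerivAt hderiv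
    ((Continuous.rexp (by continuity)).intervalIntegrable _ _)
  rw [h2] at h1
  have he : Real.exp (2 * b / Real.pi * (Real.pi/2)) ≤ 1 := by
    apply Real.exp_le_one_iff.2
    have h : 2 * b / Real.pi * (Real.pi/2) = b := by field_simp
    rw [h]; linarith
  have heq : Real.pi / (2 * (-b)) = -(Real.pi / (2*b)) := by ring
  have hu : Real.pi / (2*b) < 0 := div_neg_of_pos_of_neg hπ (by linarith)
  have hE := Real.exp_pos (2 * b / Real.pi * (Real.pi/2))
  rw [heq]
  simp only [mul_zero, Real.exp_zero, mul_one] at h1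
  nlinarith

lemma intB (b : ℝ) (hb : b < 0) :
    ∫ s in (Real.pi/2)..Real.pi, Real.exp (b * Real.sin s) ≤ Real.pi / (2 * (-b)) := by
  have hπ := Real.pi_pos
  have h1 : ∫ s in (Real.pi/2)..Real.pi, Real.exp (b * Real.sin s)
      ≤ ∫ s in (Real.pi/2)..Real.pi, Real.exp (2 * b / Real.pi * (Real.pi - s)) := by
    apply intervalIntegral.integral_mono_on (by linarith)
    · exact (Continuous.rexp (by continuity)).intervalIntegrable _ _
    · exact (Continuous.rexp (by continuity)).intervalIntegrable _ _
    · intro x hx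
      apply Real.exp_le_exp.2
      have hs : Real.sin x = Real.sin (Real.pi - x) := (Real.sin_pi_sub x).symm
      have hj := Real.mul_le_sin (x := Real.pi - x) (by linarith [hx.2]) (by linarith [hx.1])
      have h := mul_le_mul_of_nonpos_left hj hb.le
      have he : 2 * b / Real.pi * (Real.pi - x) = b * (2 / Real.pi * (Real.pi - x)) := by ring
      rw [hs]; linarith
  have hderiv : ∀ x ∈ Set.uIcc (Real.pi/2) Real.pi,
      HasDerivAt (fun s => -(Real.pi / (2*b)) * Real.exp (2 * b / Real.pi * (Real.pi - s)))
        (Real.exp (2 * b / Real.pi * (Real.pi - x))) x := by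
    intro x _
    have h := ((((hasDerivAt_id x).const_sub Real.pi).const_mul (2 * b / Real.pi)).exp).const_mul
      (-(Real.pi / (2*b)))
    have hb0 : b ≠ 0 := ne_of_lt hb
    have hπ0 : Real.pi ≠ 0 := ne_of_gt hπ
    convert h using 1
    all_goals try rfl
    simp only [id_eq, mul_one]
    field_simp
  have h2 := intervalIntegral.integral_eq_sub_of_hasDerivAt hderiv
    ((Continuous.rexp (by continuity)).intervalIntegrable _ _)
  rw [h2] at h1
  have he : Real.exp (2 * b / Real.pi * (Real.pi - Real.pi/2)) ≤ 1 := by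
    apply Real.exp_le_one_iff.2
    have h : 2 * b / Real.pi * (Real.pi - Real.pi/2) = b := by field_simp; ring
    rw [h]; linarith
  have heq : Real.pi / (2 * (-b)) = -(Real.pi / (2*b)) := by ring
  have hu : Real.pi / (2*b) < 0 := div_neg_of_pos_of_neg hπ (by linarith)
  have hE := Real.exp_pos (2 * b / Real.pi * (Real.pi - Real.pi/2))
  rw [heq]
  simp only [sub_self, mul_zero, Real.exp_zero, mul_one] at h1
  nlinarith

/-- Elementary integral estimate: for `a < b < 0`,
`|∫₀^π (e^{a sin s} - e^{b sin s})/sin s ds| ≲ (πa/b - 1) + 1 + (b/(πa)) e^{-πa/b}`. -/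
theorem stmt10 :
    ∃ C : ℝ, ∀ a b : ℝ, a < b → b < 0 →
      IntervalIntegrable
        (fun s => (Real.exp (a * Real.sin s) - Real.exp (b * Real.sin s)) / Real.sin s)
        volume 0 Real.pi ∧
      |∫ s in (0 : ℝ)..Real.pi,
          (Real.exp (a * Real.sin s) - Real.exp (b * Real.sin s)) / Real.sin s|
        ≤ C * ((Real.pi * a / b - 1) + 1 + (b / (Real.pi * a)) * Real.exp (-(Real.pi * a) / b)) := by
  use 1
  intro a b hab hb
  have hπ := Real.pi_pos
  have ha : a < 0 := lt_trans hab hb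
  have hb0 : b ≠ 0 := ne_of_lt hb
  set g : ℝ → ℝ := fun s => (Real.exp (a * Real.sin s) - Real.exp (b * Real.sin s)) / Real.sin s
    with hg
  set h : ℝ → ℝ := fun s => (b - a) * Real.exp (b * Real.sin s) with hh
  have hhc : Continuous h := by fun_prop
  have hhint : IntervalIntegrable h volume 0 Real.pi := hhc.intervalIntegrable _ _
  have hbound : ∀ s ∈ Set.uIoc (0:ℝ) Real.pi, ‖g s‖ ≤ h s := by
    intro s hs
    rw [Set.uIoc_of_le hπ.le] at hs
    have hsin : 0 ≤ Real.sin s := Real.sin_nonneg_of_nonneg_of_le_pi hs.1.le hs.2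
    rcases eq_or_lt_of_le hsin with h0 | h0
    · show ‖(Real.exp (a * Real.sin s) - Real.exp (b * Real.sin s)) / Real.sin s‖
        ≤ (b - a) * Real.exp (b * Real.sin s)
      rw [← h0]
      simp only [mul_zero, Real.exp_zero, sub_self, div_zero, norm_zero, mul_one]
      linarith
    · show ‖(Real.exp (a * Real.sin s) - Real.exp (b * Real.sin s)) / Real.sin s‖
        ≤ (b - a) * Real.exp (b * Real.sin s)
      rw [Real.norm_eq_abs, abs_div, abs_of_pos h0, div_le_iff₀ h0]
      have := ptbound a b hab hb (Real.sin s) hsin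
      nlinarith [Real.exp_pos (b * Real.sin s)]
  have haebound : ∀ᵐ s ∂(volume.restrict (Set.uIoc (0:ℝ) Real.pi)), ‖g s‖ ≤ h s :=
    (ae_restrict_iff' measurableSet_uIoc).2 (Filter.Eventually.of_forall hbound)
  have hmeas : AEStronglyMeasurable g (volume.restrict (Set.uIoc (0:ℝ) Real.pi)) := by
    apply Measurable.aestronglyMeasurable
    exact ((Real.continuous_exp.comp (continuous_const.mul Real.continuous_sin)).sub
      (Real.continuous_exp.comp (continuous_const.mul Real.continuous_sin))).measurable.div
      Real.continuous_sin.measurable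
  have hint : IntervalIntegrable g volume 0 Real.pi := hhint.mono_fun' hmeas haebound
  refine ⟨hint, ?_⟩
  have hnorm : |∫ s in (0:ℝ)..Real.pi, g s| ≤ |∫ s in (0:ℝ)..Real.pi, h s| := by
    rw [← Real.norm_eq_abs]
    exact intervalIntegral.norm_integral_le_abs_of_norm_le haebound hhint
  have hint1 : IntervalIntegrable (fun s => Real.exp (b * Real.sin s)) volume 0 (Real.pi/2) :=
    (Continuous.rexp (by fun_prop)).intervalIntegrable _ _
  have hint2 : IntervalIntegrable (fun s => Real.exp (b * Real.sin s)) volume (Real.pi/2)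
      Real.pi := (Continuous.rexp (by fun_prop)).intervalIntegrable _ _
  have hsplit : ∫ s in (0:ℝ)..Real.pi, Real.exp (b * Real.sin s)
      = (∫ s in (0:ℝ)..(Real.pi/2), Real.exp (b * Real.sin s))
        + ∫ s in (Real.pi/2)..Real.pi, Real.exp (b * Real.sin s) :=
    (intervalIntegral.integral_add_adjacent_intervals hint1 hint2).symm
  have hI : ∫ s in (0:ℝ)..Real.pi, Real.exp (b * Real.sin s) ≤ Real.pi / (-b) := by
    rw [hsplit]
    have h1 := intA b hb
    have h2 := intB b hb
    have h3 : Real.pi / (2 * (-b)) + Real.pi / (2 * (-b)) = Real.pi / (-b) := by ring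
    linarith
  have hval : ∫ s in (0:ℝ)..Real.pi, h s
      = (b - a) * ∫ s in (0:ℝ)..Real.pi, Real.exp (b * Real.sin s) := by
    rw [hh]
    exact intervalIntegral.integral_const_mul _ _
  have hpos : 0 ≤ ∫ s in (0:ℝ)..Real.pi, h s := by
    apply intervalIntegral.integral_nonneg hπ.le
    intro s _
    exact mul_nonneg (by linarith) (Real.exp_pos _).le
  have hup : ∫ s in (0:ℝ)..Real.pi, h s ≤ (b - a) * (Real.pi / (-b)) := by
    rw [hval]
    exact mul_le_mul_of_nonneg_left hI (by linarith)
  have key : (b - a) * (Real.pi / (-b)) = Real.pi * a / b - Real.pi := by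
    have h1 : Real.pi / (-b) = -(Real.pi / b) := by ring
    rw [h1]
    field_simp
    ring
  have ht : 0 < (b / (Real.pi * a)) * Real.exp (-(Real.pi * a) / b) := by
    apply mul_pos (div_pos_of_neg_of_neg hb (by nlinarith)) (Real.exp_pos _)
  rw [abs_of_nonneg hpos] at hnorm
  rw [one_mul]
  linarith
end

section
/- Let k : ℝ → ℂ be a measurable function with A := ∫_ℝ |y|^{1/8} |k(y)| dy < ∞. Then for every h ∈ L²(ℝ), the function x ↦ ∫_ℝ (|x|^{1/8} − |y|^{1/8}) k(x−y) h(y) dy is well defined almost everywhere, belongs to L²(ℝ), and ‖∫_ℝ (|x|^{1/8} − |y|^{1/8}) k(x−y) h(y) dy‖_{L²_x} ≤ A ‖h‖_{L²}. -/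
open MeasureTheory Complex ENNReal
open scoped NNReal

private lemma aux_rpow_add {p : ℝ} (hp0 : 0 ≤ p) (hp1 : p ≤ 1) {a b : ℝ}
    (ha : 0 ≤ a) (hb : 0 ≤ b) : (a + b) ^ p ≤ a ^ p + b ^ p := by
  have key := NNReal.rpow_add_le_add_rpow a.toNNReal b.toNNReal hp0 hp1
  have h1 : ((a.toNNReal + b.toNNReal : ℝ≥0) : ℝ) = a + b := by
    simp [Real.coe_toNNReal, ha, hb]
  calc (a + b) ^ p = (((a.toNNReal + b.toNNReal : ℝ≥0) : ℝ)) ^ p := by rw [h1]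
    _ = (((a.toNNReal + b.toNNReal) ^ p : ℝ≥0) : ℝ) := by rw [NNReal.coe_rpow]
    _ ≤ ((a.toNNReal ^ p + b.toNNReal ^ p : ℝ≥0) : ℝ) := by exact_mod_cast key
    _ = a ^ p + b ^ p := by
      push_cast [NNReal.coe_rpow, Real.coe_toNNReal _ ha, Real.coe_toNNReal _ hb]
      ring

private lemma aux_key (a b : ℝ) :
    |(|a| ^ ((1 : ℝ) / 8) - |b| ^ ((1 : ℝ) / 8))| ≤ |a - b| ^ ((1 : ℝ) / 8) := by
  have h8 : (0 : ℝ) ≤ 1 / 8 := by norm_num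
  have main : ∀ u v : ℝ, |v| ≤ |u| →
      |u| ^ ((1 : ℝ) / 8) - |v| ^ ((1 : ℝ) / 8) ≤ |u - v| ^ ((1 : ℝ) / 8) := by
    intro u v huv
    have h1 : |u| ^ ((1 : ℝ) / 8) ≤ (|u| - |v|) ^ ((1 : ℝ) / 8) + |v| ^ ((1 : ℝ) / 8) := by
      have := aux_rpow_add h8 (by norm_num) (sub_nonneg.2 huv) (abs_nonneg v)
      rwa [sub_add_cancel] at this
    have h2 : (|u| - |v|) ^ ((1 : ℝ) / 8) ≤ |u - v| ^ ((1 : ℝ) / 8) :=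
      Real.rpow_le_rpow (sub_nonneg.2 huv) (abs_sub_abs_le_abs_sub u v) h8
    linarith
  rcases le_total (|b|) (|a|) with hc | hc
  · rw [_root_.abs_of_nonneg (sub_nonneg.2 (Real.rpow_le_rpow (abs_nonneg b) hc h8))]
    exact main a b hc
  · rw [_root_.abs_of_nonpos (sub_nonpos.2 (Real.rpow_le_rpow (abs_nonneg a) hc h8)), neg_sub]
    have := main b a hc
    rwa [abs_sub_comm] at this

private lemma aux_main (k : ℝ → ℂ) (hk : Measurable k)
    (hA : Integrable (fun y : ℝ => |y| ^ ((1 : ℝ) / 8) * ‖k y‖))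
    (h : ℝ → ℂ) (hh : Measurable h) (hmem : MemLp h 2 (volume : Measure ℝ)) :
      (∀ᵐ x : ℝ, Integrable
        (fun y : ℝ => (((|x| ^ ((1 : ℝ) / 8) - |y| ^ ((1 : ℝ) / 8) : ℝ)) : ℂ)
          * k (x - y) * h y)) ∧
      MemLp
        (fun x : ℝ => ∫ y : ℝ, (((|x| ^ ((1 : ℝ) / 8) - |y| ^ ((1 : ℝ) / 8) : ℝ)) : ℂ)
          * k (x - y) * h y) 2 (volume : Measure ℝ) ∧
      eLpNorm
        (fun x : ℝ => ∫ y : ℝ, (((|x| ^ ((1 : ℝ) / 8) - |y| ^ ((1 : ℝ) / 8) : ℝ)) : ℂ)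
          * k (x - y) * h y) 2 (volume : Measure ℝ)
        ≤ ENNReal.ofReal (∫ y : ℝ, |y| ^ ((1 : ℝ) / 8) * ‖k y‖)
            * eLpNorm h 2 (volume : Measure ℝ) := by
  set g : ℝ → ℝ := fun y => |y| ^ ((1 : ℝ) / 8) * ‖k y‖ with hgdef
  have gmeas : Measurable g := by
    have : Measurable fun y : ℝ => |y| ^ ((1 : ℝ) / 8) := by fun_prop
    exact this.mul hk.norm
  have gnn : ∀ y, 0 ≤ g y := fun y =>
    mul_nonneg (Real.rpow_nonneg (abs_nonneg y) _) (norm_nonneg _)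
  set G : ℝ → ℝ≥0∞ := fun y => ENNReal.ofReal (g y) with hGdef
  have Gmeas : Measurable G := gmeas.ennreal_ofReal
  set H : ℝ → ℝ≥0∞ := fun y => (‖h y‖₊ : ℝ≥0∞) with hHdef
  have Hmeas : Measurable H := hh.enorm
  set F : ℝ → ℝ → ℂ := fun x y =>
    (((|x| ^ ((1 : ℝ) / 8) - |y| ^ ((1 : ℝ) / 8) : ℝ)) : ℂ) * k (x - y) * h y with hFdef
  have Fmeas : Measurable (Function.uncurry F) := by
    apply Measurable.mul
    apply Measurable.mul
    · exact Complex.measurable_ofReal.comp (by fun_prop)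
    · exact hk.comp (measurable_fst.sub measurable_snd)
    · exact hh.comp measurable_snd
  have bound : ∀ x y : ℝ, (‖F x y‖₊ : ℝ≥0∞) ≤ G (x - y) * H y := by
    intro x y
    have h1 : ‖F x y‖ ≤ g (x - y) * ‖h y‖ := by
      calc ‖F x y‖
          = |(|x| ^ ((1 : ℝ) / 8) - |y| ^ ((1 : ℝ) / 8))| * ‖k (x - y)‖ * ‖h y‖ := by
            simp only [hFdef]
            rw [norm_mul, norm_mul, Complex.norm_real, Real.norm_eq_abs]
        _ ≤ (|x - y| ^ ((1 : ℝ) / 8) * ‖k (x - y)‖) * ‖h y‖ := by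
            gcongr
            exact aux_key x y
        _ = g (x - y) * ‖h y‖ := rfl
    calc (‖F x y‖₊ : ℝ≥0∞) = ENNReal.ofReal ‖F x y‖ := (ofReal_norm _).symm
      _ ≤ ENNReal.ofReal (g (x - y) * ‖h y‖) := ENNReal.ofReal_le_ofReal h1
      _ = G (x - y) * H y := by
          rw [ENNReal.ofReal_mul (gnn _), ofReal_norm, enorm_eq_nnnorm]
  set A : ℝ≥0∞ := ∫⁻ y, G y with hAdef
  have hAeq : A = ENNReal.ofReal (∫ y, g y) :=
    (ofReal_integral_eq_lintegral_ofReal hA (Filter.Eventually.of_forall gnn)).symm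
  have hAfin : A ≠ ⊤ := by rw [hAeq]; exact ENNReal.ofReal_ne_top
  have transl : ∀ x : ℝ, (∫⁻ y, G (x - y)) = A := fun x =>
    (Measure.measurePreserving_sub_left volume x).lintegral_comp Gmeas
  have translr : ∀ y : ℝ, (∫⁻ x, G (x - y)) = A := fun y =>
    (measurePreserving_sub_right volume y).lintegral_comp Gmeas
  set S : ℝ≥0∞ := ∫⁻ y, H y ^ (2 : ℝ) with hSdef
  have hL2 : eLpNorm h 2 volume = S ^ ((1 : ℝ) / 2) := by
    rw [eLpNorm_eq_lintegral_rpow_enorm_toReal (by norm_num) (by norm_num)]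
    norm_num [hSdef, hHdef, enorm_eq_nnnorm]
  have hSfin : S ≠ ⊤ := by
    intro hc
    have h2 := hmem.2
    rw [hL2, hc, ENNReal.top_rpow_of_pos (by norm_num)] at h2
    exact (lt_irrefl _ h2).elim
  have Hne : ∀ y, H y ^ (2 : ℝ) ≠ ⊤ := fun y =>
    ENNReal.rpow_ne_top_of_nonneg (by norm_num) ENNReal.coe_ne_top
  have Wmeas : Measurable fun x => ∫⁻ y, G (x - y) * H y ^ (2 : ℝ) := by
    apply Measurable.lintegral_prod_right
    exact (Gmeas.comp (measurable_fst.sub measurable_snd)).mul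
      ((Hmeas.comp measurable_snd).pow_const _)
  have hdouble : (∫⁻ x, ∫⁻ y, G (x - y) * H y ^ (2 : ℝ)) = A * S := by
    rw [lintegral_lintegral_swap]
    · have e1 : ∀ y : ℝ, (∫⁻ x, G (x - y) * H y ^ (2 : ℝ)) = H y ^ (2 : ℝ) * A := by
        intro y
        rw [lintegral_mul_const' _ _ (Hne y), translr y, mul_comm]
      simp_rw [e1]
      rw [lintegral_mul_const' _ _ hAfin, hSdef, mul_comm]
    · exact ((Gmeas.comp (measurable_fst.sub measurable_snd)).mul
        ((Hmeas.comp measurable_snd).pow_const _)).aemeasurable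
  have hae : ∀ᵐ x : ℝ, (∫⁻ y, G (x - y) * H y ^ (2 : ℝ)) < ⊤ := by
    apply ae_lt_top Wmeas
    rw [hdouble]
    exact ENNReal.mul_ne_top hAfin hSfin
  have conj : (2 : ℝ).HolderConjugate 2 := by constructor <;> norm_num
  have CS : ∀ x : ℝ, (∫⁻ y, G (x - y) * H y)
      ≤ A ^ ((1 : ℝ) / 2) * (∫⁻ y, G (x - y) * H y ^ (2 : ℝ)) ^ ((1 : ℝ) / 2) := by
    intro x
    have mf : AEMeasurable (fun y : ℝ => G (x - y) ^ ((1 : ℝ) / 2)) volume :=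
      ((Gmeas.comp (measurable_const.sub measurable_id)).pow_const _).aemeasurable
    have mg : AEMeasurable (fun y : ℝ => G (x - y) ^ ((1 : ℝ) / 2) * H y) volume :=
      (((Gmeas.comp (measurable_const.sub measurable_id)).pow_const _).mul Hmeas).aemeasurable
    have hhold := ENNReal.lintegral_mul_le_Lp_mul_Lq volume conj mf mg
    have e0 : ∀ y : ℝ, ((fun y : ℝ => G (x - y) ^ ((1 : ℝ) / 2)) *
        fun y : ℝ => G (x - y) ^ ((1 : ℝ) / 2) * H y) y = G (x - y) * H y := by
      intro y
      simp only [Pi.mul_apply]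
      rw [← mul_assoc, ← ENNReal.rpow_add_of_nonneg _ _ (by norm_num) (by norm_num)]
      norm_num
    have e1 : (∫⁻ y, (G (x - y) ^ ((1 : ℝ) / 2)) ^ (2 : ℝ)) = A := by
      have : ∀ y : ℝ, (G (x - y) ^ ((1 : ℝ) / 2)) ^ (2 : ℝ) = G (x - y) := by
        intro y
        rw [← ENNReal.rpow_mul]
        norm_num
      simp_rw [this]
      exact transl x
    have e2 : (∫⁻ y, (G (x - y) ^ ((1 : ℝ) / 2) * H y) ^ (2 : ℝ))
        = ∫⁻ y, G (x - y) * H y ^ (2 : ℝ) := by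
      congr 1
      ext y
      rw [ENNReal.mul_rpow_of_nonneg _ _ (by norm_num : (0:ℝ) ≤ 2), ← ENNReal.rpow_mul]
      norm_num
    simp_rw [e0] at hhold
    rw [e1, e2] at hhold
    convert hhold using 2 <;> norm_num
  have keybound : ∀ x : ℝ, (∫⁻ y, (‖F x y‖₊ : ℝ≥0∞)) ≤ ∫⁻ y, G (x - y) * H y := by
    intro x
    exact lintegral_mono fun y => bound x y
  have main3 : eLpNorm (fun x => ∫ y, F x y) 2 volume ≤ A * eLpNorm h 2 volume := by
    rw [eLpNorm_eq_lintegral_rpow_enorm_toReal (by norm_num) (by norm_num), hL2,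
      ENNReal.toReal_ofNat]
    have step : ∀ x : ℝ, (‖∫ y, F x y‖₊ : ℝ≥0∞) ^ (2 : ℝ)
        ≤ A * ∫⁻ y, G (x - y) * H y ^ (2 : ℝ) := by
      intro x
      have b1 : (‖∫ y, F x y‖₊ : ℝ≥0∞)
          ≤ A ^ ((1 : ℝ) / 2) * (∫⁻ y, G (x - y) * H y ^ (2 : ℝ)) ^ ((1 : ℝ) / 2) :=
        le_trans (le_trans (enorm_integral_le_lintegral_enorm _) (keybound x)) (CS x)
      calc (‖∫ y, F x y‖₊ : ℝ≥0∞) ^ (2 : ℝ)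
          ≤ (A ^ ((1 : ℝ) / 2)
            * (∫⁻ y, G (x - y) * H y ^ (2 : ℝ)) ^ ((1 : ℝ) / 2)) ^ (2 : ℝ) :=
            ENNReal.rpow_le_rpow b1 (by norm_num)
        _ = A * ∫⁻ y, G (x - y) * H y ^ (2 : ℝ) := by
            rw [ENNReal.mul_rpow_of_nonneg _ _ (by norm_num : (0:ℝ) ≤ 2),
              ← ENNReal.rpow_mul, ← ENNReal.rpow_mul]
            norm_num
    calc (∫⁻ x, (‖∫ y, F x y‖₊ : ℝ≥0∞) ^ (2 : ℝ)) ^ ((1 : ℝ) / 2)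
        ≤ (∫⁻ x, A * ∫⁻ y, G (x - y) * H y ^ (2 : ℝ)) ^ ((1 : ℝ) / 2) :=
          ENNReal.rpow_le_rpow (lintegral_mono step) (by norm_num)
      _ = (A * (A * S)) ^ ((1 : ℝ) / 2) := by
          rw [lintegral_const_mul' _ _ hAfin, hdouble]
      _ = A * S ^ ((1 : ℝ) / 2) := by
          rw [← mul_assoc, ENNReal.mul_rpow_of_nonneg _ _ (by norm_num : (0:ℝ) ≤ 1/2)]
          congr 1
          rw [show A * A = A ^ (2 : ℝ) by
              rw [show (2:ℝ) = ((2:ℕ):ℝ) by norm_num, ENNReal.rpow_natCast, pow_two],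
            ← ENNReal.rpow_mul]
          norm_num
  refine ⟨?_, ?_, ?_⟩
  · -- a.e. integrability
    filter_upwards [hae] with x hx
    refine ⟨(Fmeas.of_uncurry_left).aestronglyMeasurable, ?_⟩
    rw [hasFiniteIntegral_iff_norm]
    have : (∫⁻ y, ENNReal.ofReal ‖F x y‖) = ∫⁻ y, (‖F x y‖₊ : ℝ≥0∞) := by
      simp_rw [ofReal_norm, enorm_eq_nnnorm]
    rw [this]
    calc (∫⁻ y, (‖F x y‖₊ : ℝ≥0∞)) ≤ ∫⁻ y, G (x - y) * H y := keybound x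
      _ ≤ A ^ ((1 : ℝ) / 2) * (∫⁻ y, G (x - y) * H y ^ (2 : ℝ)) ^ ((1 : ℝ) / 2) := CS x
      _ < ⊤ := ENNReal.mul_lt_top
          (ENNReal.rpow_lt_top_of_nonneg (by norm_num) hAfin)
          (ENNReal.rpow_lt_top_of_nonneg (by norm_num) hx.ne)
  · -- MemLp
    refine ⟨(Fmeas.stronglyMeasurable.integral_prod_right).aestronglyMeasurable, ?_⟩
    exact lt_of_le_of_lt main3 (ENNReal.mul_lt_top hAfin.lt_top hmem.2)
  · rw [← hAeq]
    exact main3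

/-- L² boundedness of the commutator-type operator with kernel
`(|x|^{1/8} - |y|^{1/8}) k(x-y)`, with operator norm at most `A = ∫ |y|^{1/8}|k(y)| dy`. -/
theorem stmt18 (k : ℝ → ℂ) (hk : Measurable k)
    (hA : Integrable (fun y : ℝ => |y| ^ ((1 : ℝ) / 8) * ‖k y‖)) :
    ∀ h : ℝ → ℂ, MemLp h 2 (volume : Measure ℝ) →
      (∀ᵐ x : ℝ, Integrable
        (fun y : ℝ => (((|x| ^ ((1 : ℝ) / 8) - |y| ^ ((1 : ℝ) / 8) : ℝ)) : ℂ)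
          * k (x - y) * h y)) ∧
      MemLp
        (fun x : ℝ => ∫ y : ℝ, (((|x| ^ ((1 : ℝ) / 8) - |y| ^ ((1 : ℝ) / 8) : ℝ)) : ℂ)
          * k (x - y) * h y) 2 (volume : Measure ℝ) ∧
      eLpNorm
        (fun x : ℝ => ∫ y : ℝ, (((|x| ^ ((1 : ℝ) / 8) - |y| ^ ((1 : ℝ) / 8) : ℝ)) : ℂ)
          * k (x - y) * h y) 2 (volume : Measure ℝ)
        ≤ ENNReal.ofReal (∫ y : ℝ, |y| ^ ((1 : ℝ) / 8) * ‖k y‖)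
            * eLpNorm h 2 (volume : Measure ℝ) := by
  intro h hmem
  obtain ⟨h', h'sm, hh'⟩ := hmem.aestronglyMeasurable
  have hmem' : MemLp h' 2 volume := hmem.ae_eq hh'
  obtain ⟨c1, c2, c3⟩ := aux_main k hk hA h' h'sm.measurable hmem'
  have heq : ∀ x : ℝ,
      (fun y : ℝ => (((|x| ^ ((1 : ℝ) / 8) - |y| ^ ((1 : ℝ) / 8) : ℝ)) : ℂ)
        * k (x - y) * h y)
      =ᵐ[volume]
      (fun y : ℝ => (((|x| ^ ((1 : ℝ) / 8) - |y| ^ ((1 : ℝ) / 8) : ℝ)) : ℂ)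
        * k (x - y) * h' y) := by
    intro x
    filter_upwards [hh'] with y hy
    rw [hy]
  have hfeq : (fun x : ℝ => ∫ y : ℝ,
        (((|x| ^ ((1 : ℝ) / 8) - |y| ^ ((1 : ℝ) / 8) : ℝ)) : ℂ) * k (x - y) * h y)
      = fun x : ℝ => ∫ y : ℝ,
        (((|x| ^ ((1 : ℝ) / 8) - |y| ^ ((1 : ℝ) / 8) : ℝ)) : ℂ) * k (x - y) * h' y :=
    funext fun x => integral_congr_ae (heq x)
  refine ⟨?_, ?_, ?_⟩
  · filter_upwards [c1] with x hx
    exact hx.congr (heq x).symm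
  · rw [hfeq]
    exact c2
  · rw [hfeq, show eLpNorm h 2 volume = eLpNorm h' 2 volume from eLpNorm_congr_ae hh']
    exact c3
end
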